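/- For every integer n ≥ 1 and every complex z with Im(z) ≠ 0, li(e^z) = e^z·(∑_{k=1}^{n} (k-1)!/z^k + n!·∫₀^∞ e^{-t}/(z-t)^{n+1} dt), where li(e^z) = ∫_{-∞+iy}^{x+iy} e^t/t dt for z = x + iy. -/

import Mathlib

open Complex MeasureTheory Set Filter

private lemma sub_ne' (z : ℂ) (hz : z.im ≠ 0) (t : ℝ) : z - (t:ℂ) ≠ 0 := by
  intro h
  have := congrArg Complex.im h
  simp at this
  exact hz this

private lemma norm_bound (z : ℂ) (hz : z.im ≠ 0) (t : ℝ) (m : ℕ) :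
    ‖Complex.exp (-(t:ℂ)) / (z - t) ^ m‖ ≤ |z.im|⁻¹ ^ m * Real.exp (-t) := by
  have h1 : ‖Complex.exp (-(t:ℂ))‖ = Real.exp (-t) := by
    rw [Complex.norm_exp]
    simp
  have h2 : |z.im| ≤ ‖z - (t:ℂ)‖ := by
    have := Complex.abs_im_le_norm (z - t)
    simpa using this
  rw [norm_div, h1, norm_pow]
  have him : 0 < |z.im| := abs_pos.2 hz
  have hnorm : 0 < ‖z - (t:ℂ)‖ := lt_of_lt_of_le him h2
  rw [div_le_iff₀ (by positivity)]
  calc Real.exp (-t) = |z.im|⁻¹ ^ m * Real.exp (-t) * |z.im| ^ m := by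
        rw [mul_right_comm, ← mul_pow, inv_mul_cancel₀ him.ne', one_pow, one_mul]
    _ ≤ |z.im|⁻¹ ^ m * Real.exp (-t) * ‖z - (t:ℂ)‖ ^ m := by gcongr

private lemma integrable_aux (z : ℂ) (hz : z.im ≠ 0) (m : ℕ) :
    IntegrableOn (fun t : ℝ => Complex.exp (-(t:ℂ)) / (z - t) ^ m) (Ioi 0) := by
  have hcont : ContinuousOn (fun t : ℝ => Complex.exp (-(t:ℂ)) / (z - t) ^ m) (Ioi 0) := by
    apply ContinuousOn.div
    · exact (Complex.continuous_exp.comp (continuous_neg.comp continuous_ofReal)).continuousOn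
    · exact (continuous_pow m).comp_continuousOn
        ((continuous_const.sub continuous_ofReal).continuousOn)
    · intro t _; exact pow_ne_zero m (sub_ne' z hz t)
  have hexp : IntegrableOn (fun t : ℝ => |z.im|⁻¹ ^ m * Real.exp (-t)) (Ioi 0) := by
    refine Integrable.const_mul ?_ _
    have h := exp_neg_integrableOn_Ioi 0 (one_pos (α := ℝ))
    simp at h
    exact h
  refine hexp.mono' (hcont.aestronglyMeasurable measurableSet_Ioi) ?_
  filter_upwards with t using norm_bound z hz t m

private lemma step (z : ℂ) (hz : z.im ≠ 0) (p : ℕ) :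
    (∫ t in Ioi (0:ℝ), Complex.exp (-(t:ℂ)) / (z - t) ^ (p+1))
      = 1 / z ^ (p+1) + (p+1) * ∫ t in Ioi (0:ℝ), Complex.exp (-(t:ℂ)) / (z - t) ^ (p+2) := by
  set m := p + 1 with hmp
  set F : ℝ → ℂ := fun t => -Complex.exp (-(t:ℂ)) / (z - t) ^ m with hF
  set F' : ℝ → ℂ := fun t =>
    Complex.exp (-(t:ℂ)) / (z - t) ^ m - m * (Complex.exp (-(t:ℂ)) / (z - t) ^ (m+1)) with hF'
  have hderiv : ∀ t : ℝ, HasDerivAt F (F' t) t := by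
    intro t
    have h1 : HasDerivAt (fun t : ℝ => -Complex.exp (-(t:ℂ))) (Complex.exp (-(t:ℂ))) t := by
      have : HasDerivAt (fun t : ℝ => Complex.exp (-(t:ℂ))) (-Complex.exp (-(t:ℂ))) t := by
        have hb : HasDerivAt (fun t : ℝ => -(t:ℂ)) (-1) t :=
          (Complex.ofRealCLM.hasDerivAt).neg
        simpa [Function.comp_def] using (Complex.hasDerivAt_exp (-(t:ℂ))).comp t hb
      simpa [Pi.neg_def] using this.neg
    have h2 : HasDerivAt (fun t : ℝ => (z - (t:ℂ)) ^ m) (-(m * (z - (t:ℂ)) ^ p)) t := by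
      have hb : HasDerivAt (fun t : ℝ => z - (t:ℂ)) (-1) t := by
        simpa using (Complex.ofRealCLM.hasDerivAt).const_sub z
      have := (hasDerivAt_pow m (z - (t:ℂ))).comp t hb
      simpa [hmp, mul_comm, mul_assoc, Function.comp_def] using this
    have hne : z - (t:ℂ) ≠ 0 := sub_ne' z hz t
    have := h1.div h2 (pow_ne_zero m hne)
    rw [Pi.div_def] at this
    convert this using 1
    · rfl
    simp only [hF', hmp]
    field_simp
    ring
  have hint : IntegrableOn F' (Ioi 0) :=
    (integrable_aux z hz m).sub ((integrable_aux z hz (m+1)).const_mul _)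
  have htend : Tendsto F atTop (nhds 0) := by
    rw [tendsto_zero_iff_norm_tendsto_zero]
    have hb : Tendsto (fun t : ℝ => |z.im|⁻¹ ^ m * Real.exp (-t)) atTop (nhds 0) := by
      simpa using (Real.tendsto_exp_neg_atTop_nhds_zero).const_mul (|z.im|⁻¹ ^ m)
    refine squeeze_zero (fun t => norm_nonneg _) (fun t => ?_) hb
    have := norm_bound z hz t m
    simpa [F, norm_neg, neg_div] using this
  have key := integral_Ioi_of_hasDerivAt_of_tendsto
    (f := F) (f' := F') (a := 0) (m := 0)
    (hderiv 0).continuousAt.continuousWithinAt (fun x _ => hderiv x) hint htend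
  have hF0 : F 0 = -(1 / z ^ m) := by
    simp [F]
    rw [neg_div, one_div]
  rw [hF0] at key
  have hsplit : (∫ t in Ioi (0:ℝ), F' t)
      = (∫ t in Ioi (0:ℝ), Complex.exp (-(t:ℂ)) / (z - t) ^ m)
        - m * ∫ t in Ioi (0:ℝ), Complex.exp (-(t:ℂ)) / (z - t) ^ (m+1) := by
    rw [integral_sub (integrable_aux z hz m) ((integrable_aux z hz (m+1)).const_mul _),
      integral_const_mul]
  rw [hsplit] at key
  have : ((m:ℂ)) = (p:ℂ) + 1 := by push_cast [hmp]; ring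
  rw [this] at key
  linear_combination key

/-- `li (e^z)` for non-real `z`, via Lehman's integral representation. -/
noncomputable def liExp (z : ℂ) : ℂ :=
  Complex.exp z * ∫ t in Ioi (0:ℝ), Complex.exp (-(t:ℂ)) / (z - t)

theorem liExp_expansion (n : ℕ) (hn : 1 ≤ n) (z : ℂ) (hz : z.im ≠ 0) :
    liExp z = Complex.exp z *
      ((∑ k ∈ Finset.Icc 1 n, ((k - 1).factorial : ℂ) / z ^ k) +
        (n.factorial : ℂ) * ∫ t in Ioi (0:ℝ), Complex.exp (-(t:ℂ)) / (z - t) ^ (n + 1)) := by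
  induction n with
  | zero => omega
  | succ n ih =>
    rcases Nat.eq_zero_or_pos n with rfl | hp
    · rw [liExp]
      congr 1
      have h := step z hz 0
      norm_num at h
      rw [h]
      norm_num
    · rw [ih hp, step z hz n]
      congr 1
      rw [Finset.sum_Icc_succ_top (by omega : 1 ≤ n + 1)]
      push_cast [Nat.factorial_succ, Nat.add_sub_cancel]
      ring
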